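/- Let n ≥ 2 and λ ∈ {1,…,n−1}. The set d = {x ∈ ℝ^n : Σ_{i=λ+1}^{n} x_i² ≤ 1/4 and −Σ_{i=1}^{λ} x_i² + Σ_{i=λ+1}^{n} x_i² = −1/3}, with the subspace topology from ℝ^n, is homeomorphic to 𝕊^{λ−1} × 𝔻^{n−λ}. -/

import Mathlib

open Filter Topology Set

/-- The model linear flow `a^t_λ` on `ℝ^n`. -/
noncomputable def modelFlow (n lam : ℕ) (t : ℝ) (x : Fin n → ℝ) : Fin n → ℝ :=
  fun i => if (i : ℕ) < lam then (2 : ℝ) ^ t * x i else (2 : ℝ) ^ (-t) * x i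

/-- An `ε`-chain of length `T` from `x` to `y` for the flow `f`. -/
def IsEpsChain {M : Type*} [MetricSpace M] (f : ℝ → M → M) (ε T : ℝ) (x y : M) : Prop :=
  ∃ (m : ℕ) (xs : ℕ → M) (ts : ℕ → ℝ), 0 < m ∧ xs 0 = x ∧ xs m = y ∧
    (∀ i ∈ Finset.Icc 1 m, 1 ≤ ts i ∧ dist (f (ts i) (xs (i - 1))) (xs i) < ε) ∧
    ∑ i ∈ Finset.Icc 1 m, ts i = T

/-- A point is chain recurrent if for every `ε > 0` there is an `ε`-chain of some
length `T` from the point to itself. -/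
def IsChainRecurrent {M : Type*} [MetricSpace M] (f : ℝ → M → M) (x : M) : Prop :=
  ∀ ε > 0, ∃ T > 0, IsEpsChain f ε T x x

/-- The stable manifold `W^s_p`. -/
def stableSet {M : Type*} [TopologicalSpace M] (f : ℝ → M → M) (p : M) : Set M :=
  {y | Tendsto (fun t : ℝ => f t y) atTop (nhds p)}

/-- The unstable manifold `W^u_p`. -/
def unstableSet {M : Type*} [TopologicalSpace M] (f : ℝ → M → M) (p : M) : Set M :=
  {y | Tendsto (fun t : ℝ => f (-t) y) atTop (nhds p)}

/-- `p` is a topologically hyperbolic fixed point of index `lam` of the flow `f`. -/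
def IsTopHyperbolicFixedPt {M : Type*} [TopologicalSpace M] (n : ℕ) (f : ℝ → M → M)
    (p : M) (lam : ℕ) : Prop :=
  lam ≤ n ∧ (∀ t : ℝ, f t p = p) ∧
  ∃ (U : Set M) (_ : IsOpen U) (hp : p ∈ U) (h : U ≃ₜ (Fin n → ℝ)),
    h ⟨p, hp⟩ = 0 ∧
    ∀ (t : ℝ) (y : M) (hy : y ∈ U) (hfy : ∀ s ∈ Set.uIcc (0 : ℝ) t, f s y ∈ U),
      (h ⟨f t y, hfy t Set.right_mem_uIcc⟩ : Fin n → ℝ) = modelFlow n lam t (h ⟨y, hy⟩)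

/-- `p` is a regular point of `φ` (in the sense of continuous Morse theory). -/
def IsRegularPoint {M : Type*} [TopologicalSpace M] (n : ℕ) (φ : M → ℝ) (p : M) : Prop :=
  ∃ (V : Set M) (_ : IsOpen V) (hp : p ∈ V) (ψ : V ≃ₜ (Fin n → ℝ)) (j : Fin n),
    (j : ℕ) + 1 = n ∧ ψ ⟨p, hp⟩ = 0 ∧ ∀ y : V, φ y = φ p + ψ y j

/-- `p` is a non-degenerate critical point of `φ` of index `ν`. -/
def IsNondegenerateCriticalPoint {M : Type*} [TopologicalSpace M] (n : ℕ) (φ : M → ℝ)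
    (p : M) (ν : ℕ) : Prop :=
  ν ≤ n ∧ ¬ IsRegularPoint n φ p ∧
  ∃ (V : Set M) (_ : IsOpen V) (hp : p ∈ V) (ψ : V ≃ₜ (Fin n → ℝ)),
    ψ ⟨p, hp⟩ = 0 ∧
    ∀ y : V, φ y = φ p
      - ∑ i ∈ Finset.univ.filter (fun i : Fin n => (i : ℕ) < ν), (ψ y i) ^ 2
      + ∑ i ∈ Finset.univ.filter (fun i : Fin n => ν ≤ (i : ℕ)), (ψ y i) ^ 2

/-- `M` is locally Euclidean of dimension `n` (every point has a neighborhood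
homeomorphic to `ℝ^n`). -/
def LocallyEuclidean (n : ℕ) (M : Type*) [TopologicalSpace M] : Prop :=
  ∀ p : M, ∃ U : Set M, IsOpen U ∧ p ∈ U ∧ Nonempty (U ≃ₜ (Fin n → ℝ))

/-- The standard `(m-1)`-sphere `𝕊^{m-1} ⊆ ℝ^m`. -/
def sphereSet (m : ℕ) : Set (Fin m → ℝ) := {x | ∑ i, (x i) ^ 2 = 1}

/-- The standard closed `m`-disk `𝔻^m ⊆ ℝ^m`. -/
def diskSet (m : ℕ) : Set (Fin m → ℝ) := {x | ∑ i, (x i) ^ 2 ≤ 1}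

section Stmt15Aux

private lemma sumLT' {n lam : ℕ} (h : lam ≤ n) (f : Fin n → ℝ) :
    ∑ i ∈ Finset.univ.filter (fun i : Fin n => (i : ℕ) < lam), f i
      = ∑ j : Fin lam, f ⟨j.1, lt_of_lt_of_le j.2 h⟩ := by
  have hset : (Finset.univ.filter (fun i : Fin n => (i : ℕ) < lam))
      = Finset.univ.map ⟨fun j : Fin lam => (⟨j.1, lt_of_lt_of_le j.2 h⟩ : Fin n),
          fun a b hab => by simpa [Fin.ext_iff] using hab⟩ := by
    ext i
    simp only [Finset.mem_filter, Finset.mem_map, Finset.mem_univ, true_and,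
      Function.Embedding.coeFn_mk]
    constructor
    · intro hi; exact ⟨⟨i, hi⟩, rfl⟩
    · rintro ⟨j, rfl⟩; exact j.2
  rw [hset, Finset.sum_map]; rfl

private lemma sumGE' {n lam : ℕ} (h : lam ≤ n) (f : Fin n → ℝ) :
    ∑ i ∈ Finset.univ.filter (fun i : Fin n => lam ≤ (i : ℕ)), f i
      = ∑ j : Fin (n - lam), f ⟨lam + j.1, by have := j.2; omega⟩ := by
  have hset : (Finset.univ.filter (fun i : Fin n => lam ≤ (i : ℕ)))
      = Finset.univ.map ⟨fun j : Fin (n - lam) => (⟨lam + j.1, by have := j.2; omega⟩ : Fin n),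
          fun a b hab => by simpa [Fin.ext_iff] using hab⟩ := by
    ext i
    simp only [Finset.mem_filter, Finset.mem_map, Finset.mem_univ, true_and,
      Function.Embedding.coeFn_mk]
    constructor
    · intro hi
      exact ⟨⟨i - lam, by have := i.2; omega⟩, Fin.ext (by show lam + ((i:ℕ) - lam) = (i:ℕ); omega)⟩
    · rintro ⟨j, rfl⟩; show lam ≤ lam + j.1; omega
  rw [hset, Finset.sum_map]; rfl

/-- A of x : sum of squares of the first `lam` coordinates. -/
private def Afun (n lam : ℕ) (x : Fin n → ℝ) : ℝ :=
  ∑ i ∈ Finset.univ.filter (fun i : Fin n => (i : ℕ) < lam), (x i) ^ 2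

/-- B of x : sum of squares of the last `n - lam` coordinates. -/
private def Bfun (n lam : ℕ) (x : Fin n → ℝ) : ℝ :=
  ∑ i ∈ Finset.univ.filter (fun i : Fin n => lam ≤ (i : ℕ)), (x i) ^ 2

private def dS (n lam : ℕ) : Set (Fin n → ℝ) :=
  {x : Fin n → ℝ | Bfun n lam x ≤ 1/4 ∧ - Afun n lam x + Bfun n lam x = -(1/3)}

private noncomputable def fwdF (n lam : ℕ) (h : lam ≤ n) (x : Fin n → ℝ) :
    (Fin lam → ℝ) × (Fin (n - lam) → ℝ) :=
  (fun j => x ⟨j.1, lt_of_lt_of_le j.2 h⟩ / Real.sqrt (Afun n lam x),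
   fun j => 2 * x ⟨lam + j.1, by have := j.2; omega⟩)

private noncomputable def bwdF (n lam : ℕ) (h : lam ≤ n)
    (p : (Fin lam → ℝ) × (Fin (n - lam) → ℝ)) : Fin n → ℝ :=
  fun i => if hi : (i : ℕ) < lam
    then Real.sqrt ((∑ j, (p.2 j) ^ 2) / 4 + 1/3) * p.1 ⟨i, hi⟩
    else p.2 ⟨(i : ℕ) - lam, by have := i.2; omega⟩ / 2

private lemma A_bwd {n lam : ℕ} (h : lam ≤ n) (p : (Fin lam → ℝ) × (Fin (n - lam) → ℝ)) :
    Afun n lam (bwdF n lam h p)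
      = ((∑ j, (p.2 j) ^ 2) / 4 + 1/3) * ∑ j, (p.1 j) ^ 2 := by
  have hC : (0:ℝ) ≤ (∑ j, (p.2 j) ^ 2) / 4 + 1/3 := by
    have : (0:ℝ) ≤ ∑ j, (p.2 j) ^ 2 := Finset.sum_nonneg fun _ _ => sq_nonneg _
    linarith
  rw [Afun, sumLT' h]
  rw [Finset.mul_sum]
  apply Finset.sum_congr rfl
  intro j _
  rw [bwdF]
  rw [dif_pos (show ((⟨j.1, lt_of_lt_of_le j.2 h⟩ : Fin n) : ℕ) < lam from j.2)]
  rw [mul_pow, Real.sq_sqrt hC]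

private lemma B_bwd {n lam : ℕ} (h : lam ≤ n) (p : (Fin lam → ℝ) × (Fin (n - lam) → ℝ)) :
    Bfun n lam (bwdF n lam h p) = (∑ j, (p.2 j) ^ 2) / 4 := by
  rw [Bfun, sumGE' h, Finset.sum_div]
  apply Finset.sum_congr rfl
  intro j _
  rw [bwdF]
  rw [dif_neg (show ¬ ((⟨lam + j.1, _⟩ : Fin n) : ℕ) < lam by simp)]
  have : (⟨(lam + j.1) - lam, by have := j.2; omega⟩ : Fin (n - lam)) = j := by
    apply Fin.ext; simp
  rw [this, div_pow]
  norm_num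

private lemma dS_facts {n lam : ℕ} {x : Fin n → ℝ} (hx : x ∈ dS n lam) :
    0 ≤ Bfun n lam x ∧ Afun n lam x = Bfun n lam x + 1/3 := by
  have hB0 : 0 ≤ Bfun n lam x := Finset.sum_nonneg fun _ _ => sq_nonneg _
  exact ⟨hB0, by have := hx.2; linarith⟩

private lemma A_nonneg {n lam : ℕ} (x : Fin n → ℝ) : 0 ≤ Afun n lam x :=
  Finset.sum_nonneg fun _ _ => sq_nonneg _

private lemma sum_sq_fwd2 {n lam : ℕ} (h : lam ≤ n) (x : Fin n → ℝ) :
    ∑ j, ((fwdF n lam h x).2 j) ^ 2 = 4 * Bfun n lam x := by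
  rw [Bfun, sumGE' h, Finset.mul_sum]
  apply Finset.sum_congr rfl
  intro j _
  show (2 * x ⟨lam + j.1, _⟩) ^ 2 = 4 * (x ⟨lam + j.1, _⟩) ^ 2
  ring

private lemma sum_sq_fwd1 {n lam : ℕ} (h : lam ≤ n) {x : Fin n → ℝ} (hx : x ∈ dS n lam) :
    ∑ j, ((fwdF n lam h x).1 j) ^ 2 = 1 := by
  obtain ⟨hB0, hA⟩ := dS_facts hx
  have hApos : 0 < Afun n lam x := by linarith
  have : ∑ j, ((fwdF n lam h x).1 j) ^ 2
      = (∑ j : Fin lam, (x ⟨j.1, lt_of_lt_of_le j.2 h⟩) ^ 2) / (Real.sqrt (Afun n lam x)) ^ 2 := by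
    rw [Finset.sum_div]
    apply Finset.sum_congr rfl
    intro j _
    show (x ⟨j.1, _⟩ / Real.sqrt (Afun n lam x)) ^ 2 = _
    rw [div_pow]
  rw [this, Real.sq_sqrt hApos.le, ← sumLT' h (fun i => (x i) ^ 2)]
  exact div_self hApos.ne'

private lemma bwd_mem_dS {n lam : ℕ} (h : lam ≤ n)
    {p : (Fin lam → ℝ) × (Fin (n - lam) → ℝ)}
    (hp1 : ∑ j, (p.1 j) ^ 2 = 1) (hp2 : ∑ j, (p.2 j) ^ 2 ≤ 1) :
    bwdF n lam h p ∈ dS n lam := by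
  have hA := A_bwd h p
  have hB := B_bwd h p
  rw [hp1, mul_one] at hA
  constructor
  · rw [hB]; linarith
  · rw [hA, hB]; ring

private lemma bwd_fwd {n lam : ℕ} (h : lam ≤ n) {x : Fin n → ℝ} (hx : x ∈ dS n lam) :
    bwdF n lam h (fwdF n lam h x) = x := by
  obtain ⟨hB0, hA⟩ := dS_facts hx
  have hApos : 0 < Afun n lam x := by linarith
  have hsq : Real.sqrt (Afun n lam x) ≠ 0 := by
    positivity
  funext i
  rw [bwdF]
  by_cases hi : (i : ℕ) < lam
  · rw [dif_pos hi, sum_sq_fwd2 h x]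
    have hC : 4 * Bfun n lam x / 4 + 1/3 = Afun n lam x := by linarith
    rw [hC]
    show Real.sqrt (Afun n lam x) * (x ⟨(⟨(i:ℕ), hi⟩ : Fin lam).1, _⟩ / Real.sqrt (Afun n lam x)) = x i
    have : (⟨(⟨(i:ℕ), hi⟩ : Fin lam).1, lt_of_lt_of_le (⟨(i:ℕ), hi⟩ : Fin lam).2 h⟩ : Fin n) = i :=
      Fin.ext rfl
    rw [this, mul_comm, div_mul_cancel₀ _ hsq]
  · rw [dif_neg hi]
    show 2 * x ⟨lam + ((i:ℕ) - lam), _⟩ / 2 = x i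
    have : (⟨lam + ((i:ℕ) - lam), by have := i.2; omega⟩ : Fin n) = i := Fin.ext (by simp; omega)
    rw [this]; ring

private lemma fwd_bwd {n lam : ℕ} (h : lam ≤ n)
    {p : (Fin lam → ℝ) × (Fin (n - lam) → ℝ)}
    (hp1 : ∑ j, (p.1 j) ^ 2 = 1) :
    fwdF n lam h (bwdF n lam h p) = p := by
  have hw0 : (0:ℝ) ≤ ∑ j, (p.2 j) ^ 2 := Finset.sum_nonneg fun _ _ => sq_nonneg _
  have hCpos : (0:ℝ) < (∑ j, (p.2 j) ^ 2) / 4 + 1/3 := by linarith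
  have hsq : Real.sqrt ((∑ j, (p.2 j) ^ 2) / 4 + 1/3) ≠ 0 := by positivity
  have hA : Afun n lam (bwdF n lam h p) = (∑ j, (p.2 j) ^ 2) / 4 + 1/3 := by
    rw [A_bwd h p, hp1, mul_one]
  refine Prod.ext ?_ ?_
  · funext j
    show (bwdF n lam h p) ⟨j.1, _⟩ / Real.sqrt (Afun n lam (bwdF n lam h p)) = p.1 j
    rw [hA, bwdF, dif_pos (show ((⟨j.1, lt_of_lt_of_le j.2 h⟩ : Fin n) : ℕ) < lam from j.2)]
    have : (⟨((⟨j.1, lt_of_lt_of_le j.2 h⟩ : Fin n) : ℕ), j.2⟩ : Fin lam) = j := Fin.ext rfl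
    rw [this, mul_comm, mul_div_assoc, div_self hsq, mul_one]
  · funext j
    show 2 * (bwdF n lam h p) ⟨lam + j.1, _⟩ = p.2 j
    rw [bwdF, dif_neg (show ¬ ((⟨lam + j.1, _⟩ : Fin n) : ℕ) < lam by simp)]
    have : (⟨(lam + j.1) - lam, by have := j.2; omega⟩ : Fin (n - lam)) = j := Fin.ext (by simp)
    rw [this]; ring

end Stmt15Aux

/-- The set `d = {x : Σ_{i≥λ} x_i² ≤ 1/4, -Σ_{i<λ} x_i² + Σ_{i≥λ} x_i² = -1/3}`
is homeomorphic to `𝕊^{λ-1} × 𝔻^{n-λ}`. -/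
theorem stmt15 (n lam : ℕ) (hn : 2 ≤ n) (hlam1 : 1 ≤ lam) (hlam2 : lam ≤ n - 1) :
    Nonempty (↥{x : Fin n → ℝ |
        (∑ i ∈ Finset.univ.filter (fun i : Fin n => lam ≤ (i : ℕ)), (x i) ^ 2 ≤ 1/4) ∧
        - ∑ i ∈ Finset.univ.filter (fun i : Fin n => (i : ℕ) < lam), (x i) ^ 2
        + ∑ i ∈ Finset.univ.filter (fun i : Fin n => lam ≤ (i : ℕ)), (x i) ^ 2 = -(1/3)} ≃ₜ
      ↥(sphereSet lam) × ↥(diskSet (n - lam))) := by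
  have hln : lam ≤ n := by omega
  show Nonempty (↥(dS n lam) ≃ₜ ↥(sphereSet lam) × ↥(diskSet (n - lam)))
  have hAc : Continuous fun x : Fin n → ℝ => Afun n lam x := by
    unfold Afun; exact continuous_finset_sum _ fun i _ => (continuous_apply i).pow 2
  have hBc : Continuous fun x : Fin n → ℝ => Bfun n lam x := by
    unfold Bfun; exact continuous_finset_sum _ fun i _ => (continuous_apply i).pow 2
  have hclosed : IsClosed (dS n lam) := by
    have hrfl : dS n lam
        = {x | Bfun n lam x ≤ 1/4} ∩ {x | - Afun n lam x + Bfun n lam x = -(1/3)} := rfl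
    rw [hrfl]
    exact (isClosed_le hBc continuous_const).inter (isClosed_eq (hAc.neg.add hBc) continuous_const)
  have hbdd : Bornology.IsBounded (dS n lam) := by
    apply (Metric.isBounded_closedBall (x := (0 : Fin n → ℝ)) (r := 1)).subset
    intro x hx
    obtain ⟨hB0, hA⟩ := dS_facts hx
    rw [Metric.mem_closedBall, dist_zero_right, pi_norm_le_iff_of_nonneg (by norm_num : (0:ℝ) ≤ 1)]
    intro i
    have hsq : (x i) ^ 2 ≤ 1 := by
      by_cases hi : (i : ℕ) < lam
      · have h1 : (x i) ^ 2 ≤ Afun n lam x :=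
          Finset.single_le_sum (f := fun i => (x i) ^ 2) (fun j _ => sq_nonneg _) (by simp [hi])
        have := hx.1; linarith
      · have h1 : (x i) ^ 2 ≤ Bfun n lam x :=
          Finset.single_le_sum (f := fun i => (x i) ^ 2) (fun j _ => sq_nonneg _)
            (by simp [Nat.le_of_not_lt hi])
        have := hx.1; linarith
    rw [Real.norm_eq_abs, ← Real.sqrt_one, ← Real.sqrt_sq_eq_abs]
    exact Real.sqrt_le_sqrt (by linarith)
  haveI : CompactSpace ↥(dS n lam) :=
    isCompact_iff_compactSpace.mp (Metric.isCompact_of_isClosed_isBounded hclosed hbdd)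
  let e : ↥(dS n lam) ≃ (↥(sphereSet lam) × ↥(diskSet (n - lam))) :=
  { toFun := fun x => (⟨(fwdF n lam hln x.1).1, sum_sq_fwd1 hln x.2⟩,
      ⟨(fwdF n lam hln x.1).2, by
        show ∑ j, ((fwdF n lam hln x.1).2 j) ^ 2 ≤ 1
        rw [sum_sq_fwd2 hln x.1]
        have := x.2.1; linarith⟩)
    invFun := fun p => ⟨bwdF n lam hln (p.1.1, p.2.1), bwd_mem_dS hln p.1.2 p.2.2⟩
    left_inv := fun x => by
      apply Subtype.ext
      show bwdF n lam hln ((fwdF n lam hln x.1).1, (fwdF n lam hln x.1).2) = x.1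
      exact bwd_fwd hln x.2
    right_inv := fun p => by
      have hfb := fwd_bwd hln (p := (p.1.1, p.2.1)) p.1.2
      refine Prod.ext (Subtype.ext ?_) (Subtype.ext ?_)
      · show (fwdF n lam hln (bwdF n lam hln (p.1.1, p.2.1))).1 = p.1.1
        rw [hfb]
      · show (fwdF n lam hln (bwdF n lam hln (p.1.1, p.2.1))).2 = p.2.1
        rw [hfb] }
  have h1 : Continuous fun x : ↥(dS n lam) => (fwdF n lam hln x.1).1 := by
    apply continuous_pi
    intro j
    show Continuous fun x : ↥(dS n lam) =>
      x.1 ⟨j.1, lt_of_lt_of_le j.2 hln⟩ / Real.sqrt (Afun n lam x.1)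
    apply Continuous.div
    · exact (continuous_apply _).comp continuous_subtype_val
    · exact (Real.continuous_sqrt.comp hAc).comp continuous_subtype_val
    · intro x
      obtain ⟨hB0, hA⟩ := dS_facts x.2
      exact Real.sqrt_ne_zero'.mpr (by linarith)
  have h2 : Continuous fun x : ↥(dS n lam) => (fwdF n lam hln x.1).2 := by
    apply continuous_pi
    intro j
    show Continuous fun x : ↥(dS n lam) => 2 * x.1 ⟨lam + j.1, by have := j.2; omega⟩
    exact continuous_const.mul ((continuous_apply _).comp continuous_subtype_val)
  have hcont : Continuous e := ((h1.subtype_mk _).prodMk (h2.subtype_mk _))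
  exact ⟨hcont.homeoOfEquivCompactToT2⟩
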